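/- arXiv:0904.2624 — 2 statements merged into one kernel-verified Lean document; each statement's English description precedes it below -/
import Mathlib

section
/- Let A and B be disjoint cylinder sets in C × C, let β_A be a baker's map with support A and β_B a baker's map with support B. Then the composition β_A ∘ β_B⁻¹ is a product of three transpositions of cylinder sets. -/
/-- The Cantor set, modeled as infinite binary sequences. -/
abbrev C := ℕ → Bool

def shift (x : C) : C := fun n => x (n + 1)

def prepend (b : Bool) (y : C) : C
  | 0 => b
  | n + 1 => y n

/-- Concatenate a finite binary word with an infinite binary sequence. -/
def cat (u : List Bool) (w : C) : C := fun n =>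
  if h : n < u.length then u.get ⟨n, h⟩ else w (n - u.length)

/-- The cylinder of all infinite sequences with prefix `u`. -/
def cyl (u : List Bool) : Set C := Set.range (cat u)

/-- `φ` is the baker's map supported on the cylinder set `[u] × [v]`: on that cylinder it
moves the first digit after `u` of the first coordinate to just after `v` in the second
coordinate, and it is the identity elsewhere. -/
def IsBaker (u v : List Bool) (φ : Equiv.Perm (C × C)) : Prop :=
  (∀ w w' : C, φ (cat u w, cat v w') = (cat u (shift w), cat v (prepend (w 0) w'))) ∧
  ∀ p : C × C, p ∉ cyl u ×ˢ cyl v → φ p = p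

/-- `φ` is a transposition of two disjoint cylinder sets in `C × C`: it swaps them by
prefix replacement and fixes everything else. -/
def IsCylTransposition (φ : Equiv.Perm (C × C)) : Prop :=
  ∃ u v u' v' : List Bool,
    (cyl u ×ˢ cyl v) ∩ (cyl u' ×ˢ cyl v') = ∅ ∧
    (∀ w w' : C, φ (cat u w, cat v w') = (cat u' w, cat v' w')) ∧
    (∀ w w' : C, φ (cat u' w, cat v' w') = (cat u w, cat v w')) ∧
    ∀ p : C × C, p ∉ (cyl u ×ˢ cyl v) ∪ (cyl u' ×ˢ cyl v') → φ p = p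


def drop' (u : List Bool) (x : C) : C := fun n => x (n + u.length)

lemma cat_apply_add (u : List Bool) (w : C) (n : ℕ) : cat u w (n + u.length) = w n := by
  simp [cat]

lemma drop'_cat (u : List Bool) (w : C) : drop' u (cat u w) = w := by
  funext n; exact cat_apply_add u w n

lemma cat_inj {u : List Bool} {w w' : C} (h : cat u w = cat u w') : w = w' := by
  funext n
  have := congrFun h (n + u.length)
  rwa [cat_apply_add, cat_apply_add] at this

lemma cat_nil (w : C) : cat [] w = w := by funext n; simp [cat]

lemma cat_cons (a : Bool) (u : List Bool) (w : C) :
    cat (a :: u) w = prepend a (cat u w) := by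
  funext n
  cases n with
  | zero => simp [cat, prepend]
  | succ m =>
    simp only [cat, prepend, List.length_cons]
    by_cases h : m < u.length
    · simp [Nat.succ_lt_succ h, h, List.get]
    · have h' : ¬ m + 1 < u.length + 1 := by omega
      simp only [h, h', dif_neg, not_false_iff]
      congr 1
      omega

lemma cat_append_singleton (u : List Bool) (b : Bool) (w : C) :
    cat (u ++ [b]) w = cat u (prepend b w) := by
  induction u with
  | nil => simp [cat_nil, cat_cons]
  | cons a t ih => simp [List.cons_append, cat_cons, ih]

lemma prepend_zero (b : Bool) (w : C) : prepend b w 0 = b := rfl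
lemma shift_prepend (b : Bool) (w : C) : shift (prepend b w) = w := by
  funext n; rfl
lemma prepend_shift (x : C) : prepend (x 0) (shift x) = x := by
  funext n; cases n <;> rfl

lemma mem_cyl (u : List Bool) (w : C) : cat u w ∈ cyl u := ⟨w, rfl⟩

lemma cyl_append_subset (u : List Bool) (b : Bool) : cyl (u ++ [b]) ⊆ cyl u := by
  rintro x ⟨w, rfl⟩
  exact ⟨prepend b w, (cat_append_singleton u b w).symm⟩

lemma head_of_mem_cyl_append {u : List Bool} {b : Bool} {z : C}
    (h : cat u z ∈ cyl (u ++ [b])) : z 0 = b := by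
  obtain ⟨t, ht⟩ := h
  rw [cat_append_singleton] at ht
  have := cat_inj ht
  rw [← this]; rfl

lemma cat_drop' {u : List Bool} {x : C} (h : x ∈ cyl u) : cat u (drop' u x) = x := by
  obtain ⟨w, rfl⟩ := h
  rw [drop'_cat]

open Classical in
noncomputable def swapFun (a b a' b' : List Bool) (p : C × C) : C × C :=
  if p ∈ cyl a ×ˢ cyl b then (cat a' (drop' a p.1), cat b' (drop' b p.2))
  else if p ∈ cyl a' ×ˢ cyl b' then (cat a (drop' a' p.1), cat b (drop' b' p.2))
  else p

lemma swapFun_apply₁ (a b a' b' : List Bool)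
    (hd : (cyl a ×ˢ cyl b) ∩ (cyl a' ×ˢ cyl b') = ∅) (w w' : C) :
    swapFun a b a' b' (cat a w, cat b w') = (cat a' w, cat b' w') := by
  have hm : (cat a w, cat b w') ∈ cyl a ×ˢ cyl b := ⟨mem_cyl a w, mem_cyl b w'⟩
  simp only [swapFun, if_pos hm, drop'_cat]

lemma not_mem_of_mem_disj {P Q : Set (C × C)} (h : P ∩ Q = ∅) {p : C × C}
    (hp : p ∈ Q) : p ∉ P := fun hP => Set.eq_empty_iff_forall_notMem.mp h p ⟨hP, hp⟩

lemma swapFun_apply₂ (a b a' b' : List Bool)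
    (hd : (cyl a ×ˢ cyl b) ∩ (cyl a' ×ˢ cyl b') = ∅) (w w' : C) :
    swapFun a b a' b' (cat a' w, cat b' w') = (cat a w, cat b w') := by
  have hm : (cat a' w, cat b' w') ∈ cyl a' ×ˢ cyl b' := ⟨mem_cyl a' w, mem_cyl b' w'⟩
  have hn : (cat a' w, cat b' w') ∉ cyl a ×ˢ cyl b := not_mem_of_mem_disj hd hm
  simp only [swapFun, if_neg hn, if_pos hm, drop'_cat]

lemma swapFun_apply_notmem (a b a' b' : List Bool) {p : C × C}
    (h : p ∉ (cyl a ×ˢ cyl b) ∪ (cyl a' ×ˢ cyl b')) :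
    swapFun a b a' b' p = p := by
  rw [Set.mem_union] at h
  push_neg at h
  simp only [swapFun, if_neg h.1, if_neg h.2]

lemma swapFun_invol (a b a' b' : List Bool)
    (hd : (cyl a ×ˢ cyl b) ∩ (cyl a' ×ˢ cyl b') = ∅) (p : C × C) :
    swapFun a b a' b' (swapFun a b a' b' p) = p := by
  by_cases h1 : p ∈ cyl a ×ˢ cyl b
  · obtain ⟨⟨w, hw⟩, ⟨w', hw'⟩⟩ := h1
    obtain ⟨x, y⟩ := p
    simp only [] at hw hw'
    rw [← hw, ← hw']
    rw [swapFun_apply₁ a b a' b' hd, swapFun_apply₂ a b a' b' hd]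
  · by_cases h2 : p ∈ cyl a' ×ˢ cyl b'
    · obtain ⟨⟨w, hw⟩, ⟨w', hw'⟩⟩ := h2
      obtain ⟨x, y⟩ := p
      simp only [] at hw hw'
      rw [← hw, ← hw']
      rw [swapFun_apply₂ a b a' b' hd, swapFun_apply₁ a b a' b' hd]
    · have h : p ∉ (cyl a ×ˢ cyl b) ∪ (cyl a' ×ˢ cyl b') := by
        rw [Set.mem_union]; tauto
      rw [swapFun_apply_notmem a b a' b' h, swapFun_apply_notmem a b a' b' h]

noncomputable def swapPerm (a b a' b' : List Bool)
    (hd : (cyl a ×ˢ cyl b) ∩ (cyl a' ×ˢ cyl b') = ∅) : Equiv.Perm (C × C) :=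
  ⟨swapFun a b a' b', swapFun a b a' b',
    swapFun_invol a b a' b' hd, swapFun_invol a b a' b' hd⟩

lemma swapPerm_isCylTransposition (a b a2 b2 : List Bool)
    (hd : (cyl a ×ˢ cyl b) ∩ (cyl a2 ×ˢ cyl b2) = ∅) :
    IsCylTransposition (swapPerm a b a2 b2 hd) :=
  ⟨a, b, a2, b2, hd, swapFun_apply₁ a b a2 b2 hd, swapFun_apply₂ a b a2 b2 hd,
    fun _ hp => swapFun_apply_notmem a b a2 b2 hp⟩

lemma swapPerm_apply₁ (a b a' b' : List Bool)
    (hd : (cyl a ×ˢ cyl b) ∩ (cyl a' ×ˢ cyl b') = ∅) (w w' : C) :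
    swapPerm a b a' b' hd (cat a w, cat b w') = (cat a' w, cat b' w') :=
  swapFun_apply₁ a b a' b' hd w w'

lemma swapPerm_apply₂ (a b a' b' : List Bool)
    (hd : (cyl a ×ˢ cyl b) ∩ (cyl a' ×ˢ cyl b') = ∅) (w w' : C) :
    swapPerm a b a' b' hd (cat a' w, cat b' w') = (cat a w, cat b w') :=
  swapFun_apply₂ a b a' b' hd w w'

lemma swapPerm_apply_notmem (a b a' b' : List Bool)
    (hd : (cyl a ×ˢ cyl b) ∩ (cyl a' ×ˢ cyl b') = ∅) {p : C × C}
    (h : p ∉ (cyl a ×ˢ cyl b) ∪ (cyl a' ×ˢ cyl b')) :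
    swapPerm a b a' b' hd p = p :=
  swapFun_apply_notmem a b a' b' h


/-- A baker's map composed with the inverse of a baker's map with disjoint cylinder
support is a product of three transpositions of cylinder sets. -/
theorem stmt_9 (u v u' v' : List Bool)
    (hdisj : (cyl u ×ˢ cyl v) ∩ (cyl u' ×ˢ cyl v') = ∅)
    (βA βB : Equiv.Perm (C × C)) (hA : IsBaker u v βA) (hB : IsBaker u' v' βB) :
    ∃ τ₁ τ₂ τ₃ : Equiv.Perm (C × C),
      IsCylTransposition τ₁ ∧ IsCylTransposition τ₂ ∧ IsCylTransposition τ₃ ∧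
      βA * βB⁻¹ = τ₁ * τ₂ * τ₃ := by
  have hdisj' : (cyl u' ×ˢ cyl v') ∩ (cyl u ×ˢ cyl v) = ∅ := by
    rw [Set.inter_comm]; exact hdisj
  have hdL : (cyl (u ++ [false]) ×ˢ cyl v) ∩ (cyl u' ×ˢ cyl (v' ++ [false])) = ∅ := by
    rw [Set.eq_empty_iff_forall_notMem]
    rintro p ⟨h1, h2⟩
    exact Set.eq_empty_iff_forall_notMem.mp hdisj p
      ⟨⟨cyl_append_subset u false h1.1, h1.2⟩, ⟨h2.1, cyl_append_subset v' false h2.2⟩⟩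
  have hdR : (cyl (u ++ [true]) ×ˢ cyl v) ∩ (cyl u' ×ˢ cyl (v' ++ [true])) = ∅ := by
    rw [Set.eq_empty_iff_forall_notMem]
    rintro p ⟨h1, h2⟩
    exact Set.eq_empty_iff_forall_notMem.mp hdisj p
      ⟨⟨cyl_append_subset u true h1.1, h1.2⟩, ⟨h2.1, cyl_append_subset v' true h2.2⟩⟩
  refine ⟨swapPerm u v u' v' hdisj, swapPerm (u ++ [true]) v u' (v' ++ [true]) hdR,
    swapPerm (u ++ [false]) v u' (v' ++ [false]) hdL,
    swapPerm_isCylTransposition _ _ _ _ _, swapPerm_isCylTransposition _ _ _ _ _,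
    swapPerm_isCylTransposition _ _ _ _ _, ?_⟩
  apply Equiv.ext
  intro p
  simp only [Equiv.Perm.mul_apply, Equiv.Perm.inv_def]
  by_cases hpA : p ∈ cyl u ×ˢ cyl v
  · obtain ⟨⟨w, hw⟩, ⟨w', hw'⟩⟩ := hpA
    obtain ⟨x, y⟩ := p
    simp only [] at hw hw'
    subst hw; subst hw'
    have hpB : (cat u w, cat v w') ∉ cyl u' ×ˢ cyl v' :=
      not_mem_of_mem_disj hdisj' ⟨mem_cyl u w, mem_cyl v w'⟩
    have hfix : βB.symm (cat u w, cat v w') = (cat u w, cat v w') := by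
      conv_lhs => rw [← hB.2 _ hpB]
      exact βB.symm_apply_apply _
    rw [hfix, hA.1 w w']
    cases hw0 : w 0 with
    | false =>
      have hwrep : cat u w = cat (u ++ [false]) (shift w) := by
        rw [cat_append_singleton, ← hw0, prepend_shift]
      have hqB : (cat u' (shift w), cat (v' ++ [false]) w') ∈ cyl u' ×ˢ cyl v' :=
        ⟨mem_cyl u' _, cyl_append_subset v' false (mem_cyl _ _)⟩
      have hq : (cat u' (shift w), cat (v' ++ [false]) w') ∉
          (cyl (u ++ [true]) ×ˢ cyl v) ∪ (cyl u' ×ˢ cyl (v' ++ [true])) := by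
        rintro (hin | hin)
        · exact not_mem_of_mem_disj hdisj hqB ⟨cyl_append_subset u true hin.1, hin.2⟩
        · have h2 := hin.2
          rw [cat_append_singleton] at h2
          have := head_of_mem_cyl_append h2
          simp [prepend] at this
      rw [hwrep, swapPerm_apply₁, swapPerm_apply_notmem _ _ _ _ hdR hq,
        cat_append_singleton v' false w', swapPerm_apply₂]
    | true =>
      have hp0 : (cat u w, cat v w') ∉
          (cyl (u ++ [false]) ×ˢ cyl v) ∪ (cyl u' ×ˢ cyl (v' ++ [false])) := by
        rintro (hin | hin)
        · have := head_of_mem_cyl_append hin.1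
          rw [hw0] at this
          simp at this
        · exact hpB ⟨hin.1, cyl_append_subset v' false hin.2⟩
      have hwrep : cat u w = cat (u ++ [true]) (shift w) := by
        rw [cat_append_singleton, ← hw0, prepend_shift]
      rw [swapPerm_apply_notmem _ _ _ _ hdL hp0, hwrep, swapPerm_apply₁,
        cat_append_singleton v' true w', swapPerm_apply₂]
  · by_cases hpB : p ∈ cyl u' ×ˢ cyl v'
    · obtain ⟨⟨w, hw⟩, ⟨w', hw'⟩⟩ := hpB
      obtain ⟨x, y⟩ := p
      simp only [] at hw hw'
      subst hw; subst hw'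
      have hpA' : (cat u' w, cat v' w') ∉ cyl u ×ˢ cyl v := hpA
      have key : βB.symm (cat u' w, cat v' w') =
          (cat u' (prepend (w' 0) w), cat v' (shift w')) := by
        rw [Equiv.symm_apply_eq, hB.1, shift_prepend, prepend_zero, prepend_shift]
      have hmemB : (cat u' (prepend (w' 0) w), cat v' (shift w')) ∈ cyl u' ×ˢ cyl v' :=
        ⟨mem_cyl _ _, mem_cyl _ _⟩
      have hfixA : βA (cat u' (prepend (w' 0) w), cat v' (shift w')) =
          (cat u' (prepend (w' 0) w), cat v' (shift w')) :=
        hA.2 _ (not_mem_of_mem_disj hdisj hmemB)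
      rw [key, hfixA]
      cases hw0 : w' 0 with
      | false =>
        have hrep : cat v' w' = cat (v' ++ [false]) (shift w') := by
          rw [cat_append_singleton, ← hw0, prepend_shift]
        have hq : (cat (u ++ [false]) w, cat v (shift w')) ∉
            (cyl (u ++ [true]) ×ˢ cyl v) ∪ (cyl u' ×ˢ cyl (v' ++ [true])) := by
          rintro (hin | hin)
          · have h1 := hin.1
            rw [cat_append_singleton] at h1
            have := head_of_mem_cyl_append h1
            simp [prepend] at this
          · exact not_mem_of_mem_disj hdisj
              ⟨hin.1, cyl_append_subset v' true hin.2⟩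
              ⟨cyl_append_subset u false (mem_cyl _ _), mem_cyl _ _⟩
        rw [hrep, swapPerm_apply₂, swapPerm_apply_notmem _ _ _ _ hdR hq,
          cat_append_singleton u false w, swapPerm_apply₁]
      | true =>
        have hp0 : (cat u' w, cat v' w') ∉
            (cyl (u ++ [false]) ×ˢ cyl v) ∪ (cyl u' ×ˢ cyl (v' ++ [false])) := by
          rintro (hin | hin)
          · exact hpA' ⟨cyl_append_subset u false hin.1, hin.2⟩
          · have := head_of_mem_cyl_append hin.2
            rw [hw0] at this
            simp at this
        have hrep : cat v' w' = cat (v' ++ [true]) (shift w') := by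
          rw [cat_append_singleton, ← hw0, prepend_shift]
        rw [swapPerm_apply_notmem _ _ _ _ hdL hp0, hrep, swapPerm_apply₂,
          cat_append_singleton u true w, swapPerm_apply₁]
    · have hfixB : βB.symm p = p := by
        conv_lhs => rw [← hB.2 _ hpB]
        exact βB.symm_apply_apply _
      have hL : p ∉ (cyl (u ++ [false]) ×ˢ cyl v) ∪ (cyl u' ×ˢ cyl (v' ++ [false])) := by
        rintro (hin | hin)
        · exact hpA ⟨cyl_append_subset u false hin.1, hin.2⟩
        · exact hpB ⟨hin.1, cyl_append_subset v' false hin.2⟩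
      have hR : p ∉ (cyl (u ++ [true]) ×ˢ cyl v) ∪ (cyl u' ×ˢ cyl (v' ++ [true])) := by
        rintro (hin | hin)
        · exact hpA ⟨cyl_append_subset u true hin.1, hin.2⟩
        · exact hpB ⟨hin.1, cyl_append_subset v' true hin.2⟩
      have hS : p ∉ (cyl u ×ˢ cyl v) ∪ (cyl u' ×ˢ cyl v') := by
        rintro (hin | hin)
        · exact hpA hin
        · exact hpB hin
      rw [hfixB, hA.2 _ hpA, swapPerm_apply_notmem _ _ _ _ hdL hL,
        swapPerm_apply_notmem _ _ _ _ hdR hR, swapPerm_apply_notmem _ _ _ _ hdisj hS]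
end

section
/- Any two transpositions of disjoint cylinder sets in C × C that swap cylinders of matching 'shape' are conjugate by a homeomorphism built from prefix replacements. Precisely: given transpositions τ swapping [u₁]×[v₁] with [u₂]×[v₂], and σ swapping [u₁']×[v₁'] with [u₂']×[v₂'], where the four cylinders involved in each are pairwise disjoint and their complements are nonempty, there exists a prefix-replacement homeomorphism h of C × C with h τ h⁻¹ = σ. -/
/-- `h` is a prefix-replacement homeomorphism of `C × C`: it is determined by a bijection
between two finite partitions of `C × C` into cylinder sets, sending `u·w ↦ u'·w` on each
piece. -/
def IsPrefixReplacement (h : Equiv.Perm (C × C)) : Prop :=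
  ∃ P : Finset ((List Bool × List Bool) × (List Bool × List Bool)),
    (⋃ q ∈ P, cyl q.1.1 ×ˢ cyl q.1.2) = Set.univ ∧
    (∀ q ∈ P, ∀ r ∈ P, q ≠ r →
      (cyl q.1.1 ×ˢ cyl q.1.2) ∩ (cyl r.1.1 ×ˢ cyl r.1.2) = ∅) ∧
    (⋃ q ∈ P, cyl q.2.1 ×ˢ cyl q.2.2) = Set.univ ∧
    (∀ q ∈ P, ∀ r ∈ P, q ≠ r →
      (cyl q.2.1 ×ˢ cyl q.2.2) ∩ (cyl r.2.1 ×ˢ cyl r.2.2) = ∅) ∧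
    ∀ q ∈ P, ∀ w w' : C, h (cat q.1.1 w, cat q.1.2 w') = (cat q.2.1 w, cat q.2.2 w')

/-- `τ` is the transposition swapping the disjoint cylinder sets `[u₁]×[v₁]` and
`[u₂]×[v₂]` by prefix replacement. -/
def IsTranspositionOn (u₁ v₁ u₂ v₂ : List Bool) (τ : Equiv.Perm (C × C)) : Prop :=
  (cyl u₁ ×ˢ cyl v₁) ∩ (cyl u₂ ×ˢ cyl v₂) = ∅ ∧
  (∀ w w' : C, τ (cat u₁ w, cat v₁ w') = (cat u₂ w, cat v₂ w')) ∧
  (∀ w w' : C, τ (cat u₂ w, cat v₂ w') = (cat u₁ w, cat v₁ w')) ∧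
  ∀ p : C × C, p ∉ (cyl u₁ ×ˢ cyl v₁) ∪ (cyl u₂ ×ˢ cyl v₂) → τ p = p

abbrev Word := List Bool
abbrev Piece := Word × Word

def dec (u : Word) (x : C) : C := fun n => x (n + u.length)

lemma dec_cat (u : Word) (w : C) : dec u (cat u w) = w := by
  funext n; simp [dec, cat]

lemma cat_mem (u : Word) (w : C) : cat u w ∈ cyl u := ⟨w, rfl⟩
lemma mem_cyl_s14 {x : C} {u : Word} : x ∈ cyl u ↔ ∃ w, cat u w = x := Set.mem_range
lemma cat_dec {u : Word} {x : C} (h : x ∈ cyl u) : cat u (dec u x) = x := by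
  obtain ⟨w, rfl⟩ := h; rw [dec_cat]
lemma cat_get {u : Word} {w : C} {i : ℕ} (h : i < u.length) : cat u w i = u.get ⟨i, h⟩ := by
  simp [cat, h]

lemma cat_append (u v : Word) (w : C) : cat (u ++ v) w = cat u (cat v w) := by
  funext n
  simp only [cat, List.length_append, List.get_eq_getElem]
  rcases lt_or_ge n u.length with h | h
  · rw [dif_pos (show n < u.length + v.length by omega), dif_pos h]
    exact List.getElem_append_left h
  · rw [dif_neg (show ¬ n < u.length by omega)]
    rcases lt_or_ge (n - u.length) v.length with h2 | h2
    · rw [dif_pos (show n < u.length + v.length by omega), dif_pos h2]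
      exact List.getElem_append_right h
    · rw [dif_neg (show ¬ n < u.length + v.length by omega),
        dif_neg (show ¬ n - u.length < v.length by omega)]
      congr 1
      omega

lemma cyl_mono {u a : Word} (h : u <+: a) : cyl a ⊆ cyl u := by
  obtain ⟨t, rfl⟩ := h
  rintro x ⟨w, rfl⟩
  rw [cat_append]
  exact cat_mem _ _

lemma cyl_disj_of_not_prefix {u a : Word} (hl : u.length ≤ a.length) (h : ¬ u <+: a) :
    cyl a ∩ cyl u = ∅ := by
  ext x
  simp only [Set.mem_inter_iff, Set.mem_empty_iff_false, iff_false, not_and]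
  rintro ⟨w, rfl⟩ ⟨w', hw'⟩
  apply h
  have : u = a.take u.length := by
    apply List.ext_get (by simp [hl])
    intro i hi hi'
    have h1 : i < u.length := hi
    have h2 : i < a.length := by omega
    have := congrFun hw' i
    rw [cat_get h1, cat_get h2] at this
    simp only [List.get_eq_getElem] at this
    simpa [List.getElem_take] using this
  rw [this]
  exact List.take_prefix _ _

lemma cyl_disj_of_len_ne {a b : Word} (hl : a.length = b.length) (h : a ≠ b) :
    cyl a ∩ cyl b = ∅ := by
  apply cyl_disj_of_not_prefix (le_of_eq hl.symm)
  intro hp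
  exact h (hp.eq_of_length hl.symm).symm

-- pieces
def pcyl (q : Piece) : Set (C × C) := cyl q.1 ×ˢ cyl q.2
def pcat (q : Piece) (z : C × C) : C × C := (cat q.1 z.1, cat q.2 z.2)
def pdec (q : Piece) (p : C × C) : C × C := (dec q.1 p.1, dec q.2 p.2)

lemma pdec_pcat (q : Piece) (z : C × C) : pdec q (pcat q z) = z := by
  simp [pdec, pcat, dec_cat]
lemma pcat_mem (q : Piece) (z : C × C) : pcat q z ∈ pcyl q :=
  ⟨cat_mem _ _, cat_mem _ _⟩
lemma pcat_pdec {q : Piece} {p : C × C} (h : p ∈ pcyl q) : pcat q (pdec q p) = p := by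
  obtain ⟨h1, h2⟩ := h
  simp [pcat, pdec, cat_dec h1, cat_dec h2]

lemma pcyl_disj_left {q r : Piece} (h : cyl q.1 ∩ cyl r.1 = ∅) : pcyl q ∩ pcyl r = ∅ := by
  apply Set.eq_empty_iff_forall_notMem.mpr
  rintro p ⟨⟨h1, -⟩, ⟨h2, -⟩⟩
  exact Set.eq_empty_iff_forall_notMem.mp h p.1 ⟨h1, h2⟩

lemma pcyl_disj_right {q r : Piece} (h : cyl q.2 ∩ cyl r.2 = ∅) : pcyl q ∩ pcyl r = ∅ := by
  apply Set.eq_empty_iff_forall_notMem.mpr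
  rintro p ⟨⟨-, h1⟩, ⟨-, h2⟩⟩
  exact Set.eq_empty_iff_forall_notMem.mp h p.2 ⟨h1, h2⟩

lemma pcyl_mono {q r : Piece} (h1 : cyl q.1 ⊆ cyl r.1) (h2 : cyl q.2 ⊆ cyl r.2) :
    pcyl q ⊆ pcyl r := Set.prod_mono h1 h2

/-- Splitting a cylinder into `j+1` cylinders. -/
def comb (a : Word) : ℕ → List Word
  | 0 => [a]
  | j + 1 => (a ++ [false]) :: comb (a ++ [true]) j

lemma comb_length (a : Word) (j : ℕ) : (comb a j).length = j + 1 := by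
  induction j generalizing a with
  | zero => rfl
  | succ j ih => simp [comb, ih]

lemma comb_sub (a : Word) (j : ℕ) : ∀ c ∈ comb a j, cyl c ⊆ cyl a := by
  induction j generalizing a with
  | zero => rintro c hc; simp [comb] at hc; subst hc; rfl
  | succ j ih =>
    rintro c hc
    rcases List.mem_cons.mp hc with rfl | hc
    · exact cyl_mono ⟨[false], rfl⟩
    · exact (ih _ c hc).trans (cyl_mono ⟨[true], rfl⟩)

lemma cat_head (w : C) : cat [w 0] (shift w) = w := by
  funext n
  cases n with
  | zero => simp [cat]
  | succ n => simp [cat, shift]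

lemma comb_cover (a : Word) (j : ℕ) : cyl a ⊆ ⋃ c ∈ comb a j, cyl c := by
  induction j generalizing a with
  | zero => intro x hx; simpa [comb] using hx
  | succ j ih =>
    rintro x ⟨w, rfl⟩
    have hx : cat a w = cat (a ++ [w 0]) (shift w) := by
      rw [cat_append, cat_head]
    cases h0 : w 0 with
    | false =>
      have hm : cat a w ∈ cyl (a ++ [false]) := by
        rw [hx, h0]; exact cat_mem _ _
      exact Set.mem_biUnion (show _ ∈ (a ++ [false]) :: comb (a ++ [true]) j from List.mem_cons_self) hm
    | true =>
      have hm : cat a w ∈ ⋃ c ∈ comb (a ++ [true]) j, cyl c :=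
        ih _ (by rw [hx, h0]; exact cat_mem _ _)
      simp only [Set.mem_iUnion, exists_prop] at hm ⊢
      obtain ⟨c, hc, hxc⟩ := hm
      exact ⟨c, List.mem_cons_of_mem _ hc, hxc⟩

lemma comb_pairwise (a : Word) (j : ℕ) :
    (comb a j).Pairwise (fun c d => cyl c ∩ cyl d = ∅) := by
  induction j generalizing a with
  | zero => simp [comb]
  | succ j ih =>
    refine List.pairwise_cons.mpr ⟨?_, ih _⟩
    intro d hd
    have hsub : cyl d ⊆ cyl (a ++ [true]) := comb_sub _ _ d hd
    have hdisj : cyl (a ++ [false]) ∩ cyl (a ++ [true]) = ∅ := by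
      apply cyl_disj_of_len_ne (by simp)
      simp
    rw [Set.eq_empty_iff_forall_notMem] at hdisj ⊢
    exact fun x ⟨h1, h2⟩ => hdisj x ⟨h1, hsub h2⟩

/-- All binary words of length `n`. -/
def wordsOfLen : ℕ → List Word
  | 0 => [[]]
  | n + 1 => (wordsOfLen n).flatMap fun a => [a ++ [false], a ++ [true]]

lemma wordsOfLen_length {n : ℕ} : ∀ a ∈ wordsOfLen n, a.length = n := by
  induction n with
  | zero => simp [wordsOfLen]
  | succ n ih =>
    intro a ha
    simp only [wordsOfLen, List.mem_flatMap, List.mem_cons, List.not_mem_nil, or_false] at ha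
    obtain ⟨b, hb, h | h⟩ := ha <;> simp [h, ih b hb]

lemma wordsOfLen_cover (n : ℕ) (x : C) : ∃ a ∈ wordsOfLen n, x ∈ cyl a := by
  induction n with
  | zero => exact ⟨[], by simp [wordsOfLen], x, by funext k; simp [cat]⟩
  | succ n ih =>
    obtain ⟨a, ha, w, hw⟩ := ih
    refine ⟨a ++ [w 0], ?_, shift w, ?_⟩
    · simp only [wordsOfLen, List.mem_flatMap]
      exact ⟨a, ha, by cases h : w 0 <;> simp⟩
    · rw [cat_append, cat_head, hw]

lemma wordsOfLen_nodup (n : ℕ) : (wordsOfLen n).Nodup := by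
  induction n with
  | zero => simp [wordsOfLen]
  | succ n ih =>
    simp only [wordsOfLen]
    rw [List.nodup_flatMap]
    constructor
    · intro a ha
      simp
    · refine List.Pairwise.imp_of_mem ?_ ih
      intro a b ha hb hne
      intro x hx1 hx2
      simp only [List.mem_cons, List.not_mem_nil, or_false] at hx1 hx2
      have hl : a.length = b.length := by
        rw [wordsOfLen_length a ha, wordsOfLen_length b hb]
      rcases hx1 with rfl | rfl <;> rcases hx2 with h | h <;>
        exact hne (List.append_inj' h (by simp)).1

/-- All pieces of depth `N`. -/
def allPieces (N : ℕ) : List Piece :=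
  (wordsOfLen N).flatMap fun a => (wordsOfLen N).map fun b => (a, b)

lemma allPieces_mem {N : ℕ} {q : Piece} :
    q ∈ allPieces N ↔ q.1 ∈ wordsOfLen N ∧ q.2 ∈ wordsOfLen N := by
  simp only [allPieces, List.mem_flatMap, List.mem_map]
  constructor
  · rintro ⟨a, ha, b, hb, rfl⟩
    exact ⟨ha, hb⟩
  · rintro ⟨h1, h2⟩
    exact ⟨q.1, h1, q.2, h2, rfl⟩

lemma allPieces_cover (N : ℕ) (p : C × C) : ∃ q ∈ allPieces N, p ∈ pcyl q := by
  obtain ⟨a, ha, hxa⟩ := wordsOfLen_cover N p.1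
  obtain ⟨b, hb, hxb⟩ := wordsOfLen_cover N p.2
  exact ⟨(a, b), allPieces_mem.mpr ⟨ha, hb⟩, hxa, hxb⟩

lemma allPieces_disj {N : ℕ} {q r : Piece} (hq : q ∈ allPieces N) (hr : r ∈ allPieces N)
    (hne : q ≠ r) : pcyl q ∩ pcyl r = ∅ := by
  obtain ⟨hq1, hq2⟩ := allPieces_mem.mp hq
  obtain ⟨hr1, hr2⟩ := allPieces_mem.mp hr
  by_cases h1 : q.1 = r.1
  · have h2 : q.2 ≠ r.2 := fun h2 => hne (Prod.ext h1 h2)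
    exact pcyl_disj_right (cyl_disj_of_len_ne
      (by rw [wordsOfLen_length _ hq2, wordsOfLen_length _ hr2]) h2)
  · exact pcyl_disj_left (cyl_disj_of_len_ne
      (by rw [wordsOfLen_length _ hq1, wordsOfLen_length _ hr1]) h1)

lemma allPieces_nodup (N : ℕ) : (allPieces N).Nodup := by
  rw [allPieces, List.nodup_flatMap]
  constructor
  · intro a _
    exact (wordsOfLen_nodup N).map (fun b b' h => (Prod.mk.injEq _ _ _ _ ▸ h).2)
  · refine List.Pairwise.imp_of_mem ?_ (wordsOfLen_nodup N)
    intro a b _ _ hne x hx1 hx2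
    simp only [List.mem_map] at hx1 hx2
    obtain ⟨c, _, rfl⟩ := hx1
    obtain ⟨d, _, h⟩ := hx2
    exact hne ((Prod.mk.injEq _ _ _ _ ▸ h).1.symm)

def Rp (q r : Piece) : Prop := pcyl q ∩ pcyl r = ∅

lemma Rp_symm : Symmetric Rp := fun q r h => by rw [Rp, Set.inter_comm]; exact h

lemma allPieces_pairwise (N : ℕ) : (allPieces N).Pairwise Rp :=
  List.Pairwise.imp_of_mem
    (fun {q r} hq hr hne => allPieces_disj hq hr hne) (allPieces_nodup N)

/-- Replace the head piece of a list by its `j+1`-fold splitting. -/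
def pad : List Piece → ℕ → List Piece
  | [], _ => []
  | (a, b) :: t, j => ((comb a j).map fun c => (c, b)) ++ t

lemma pad_length {l : List Piece} (h : l ≠ []) (j : ℕ) :
    (pad l j).length = l.length + j := by
  match l with
  | (a, b) :: t => simp [pad, comb_length]; omega

lemma pad_sub {l : List Piece} (j : ℕ) : ∀ q ∈ pad l j, ∃ r ∈ l, pcyl q ⊆ pcyl r := by
  match l with
  | [] => intro q hq; simp [pad] at hq
  | (a, b) :: t =>
    intro q hq
    simp only [pad, List.mem_append, List.mem_map] at hq
    rcases hq with ⟨c, hc, rfl⟩ | hq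
    · exact ⟨(a, b), List.mem_cons_self, pcyl_mono (comb_sub a j c hc) le_rfl⟩
    · exact ⟨q, List.mem_cons_of_mem _ hq, le_rfl⟩

lemma pad_cover {l : List Piece} (j : ℕ) :
    (⋃ q ∈ l, pcyl q) ⊆ ⋃ q ∈ pad l j, pcyl q := by
  match l with
  | [] => simp
  | (a, b) :: t =>
    intro p hp
    simp only [Set.mem_iUnion, exists_prop] at hp ⊢
    obtain ⟨q, hq, hpq⟩ := hp
    rcases List.mem_cons.mp hq with rfl | hq
    · obtain ⟨h1, h2⟩ := hpq
      have := comb_cover a j h1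
      simp only [Set.mem_iUnion, exists_prop] at this
      obtain ⟨c, hc, hc1⟩ := this
      exact ⟨(c, b), by simp only [pad, List.mem_append, List.mem_map]; exact Or.inl ⟨c, hc, rfl⟩,
        hc1, h2⟩
    · exact ⟨q, by simp only [pad, List.mem_append]; exact Or.inr hq, hpq⟩

lemma pad_pairwise {l : List Piece} (j : ℕ) (h : l.Pairwise Rp) :
    (pad l j).Pairwise Rp := by
  match l with
  | [] => simp [pad]
  | (a, b) :: t =>
    rw [List.pairwise_cons] at h
    obtain ⟨hhead, htail⟩ := h
    rw [pad, List.pairwise_append]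
    refine ⟨?_, htail, ?_⟩
    · rw [List.pairwise_map]
      refine (comb_pairwise a j).imp ?_
      intro c d hcd
      exact pcyl_disj_left hcd
    · intro q hq r hr
      simp only [List.mem_map] at hq
      obtain ⟨c, hc, rfl⟩ := hq
      have hsub : pcyl (c, b) ⊆ pcyl (a, b) := pcyl_mono (comb_sub a j c hc) le_rfl
      have := hhead r hr
      rw [Rp, Set.eq_empty_iff_forall_notMem] at this ⊢
      exact fun p ⟨h1, h2⟩ => this p ⟨hsub h1, h2⟩

lemma pairwise_zip {α β : Type*} {R : α → α → Prop} {S : β → β → Prop} :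
    ∀ {l : List α} {r : List β}, l.Pairwise R → r.Pairwise S →
    (l.zip r).Pairwise fun p q => R p.1 q.1 ∧ S p.2 q.2 := by
  intro l
  induction l with
  | nil => intro r _ _; simp
  | cons a l ih =>
    intro r hl hr
    match r with
    | [] => simp
    | b :: r =>
      rw [List.pairwise_cons] at hl hr
      rw [List.zip_cons_cons, List.pairwise_cons]
      refine ⟨?_, ih hl.2 hr.2⟩
      intro x hx
      obtain ⟨h1, h2⟩ := List.of_mem_zip hx
      exact ⟨hl.1 _ h1, hr.1 _ h2⟩

lemma zip_mem_left {α β : Type*} {l : List α} {r : List β} (h : l.length = r.length)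
    {a : α} (ha : a ∈ l) : ∃ b, (a, b) ∈ l.zip r := by
  obtain ⟨i, hi, rfl⟩ := List.mem_iff_getElem.mp ha
  refine ⟨r[i]'(by omega), ?_⟩
  rw [List.mem_iff_getElem]
  exact ⟨i, by simp [List.length_zip]; omega, by simp [List.getElem_zip]⟩

lemma zip_mem_right {α β : Type*} {l : List α} {r : List β} (h : l.length = r.length)
    {b : β} (hb : b ∈ r) : ∃ a, (a, b) ∈ l.zip r := by
  obtain ⟨i, hi, rfl⟩ := List.mem_iff_getElem.mp hb
  refine ⟨l[i]'(by omega), ?_⟩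
  rw [List.mem_iff_getElem]
  exact ⟨i, by simp [List.length_zip]; omega, by simp [List.getElem_zip]⟩

abbrev Table := Finset (Piece × Piece)

def Lcov (P : Table) : Prop := (⋃ q ∈ P, pcyl q.1) = Set.univ
def Ldis (P : Table) : Prop := ∀ q ∈ P, ∀ r ∈ P, q ≠ r → pcyl q.1 ∩ pcyl r.1 = ∅
def Rcov (P : Table) : Prop := (⋃ q ∈ P, pcyl q.2) = Set.univ
def Rdis (P : Table) : Prop := ∀ q ∈ P, ∀ r ∈ P, q ≠ r → pcyl q.2 ∩ pcyl r.2 = ∅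

def swapEmb : (Piece × Piece) ↪ (Piece × Piece) := ⟨Prod.swap, Prod.swap_injective⟩

lemma mem_swap {P : Table} {q : Piece × Piece} :
    q ∈ P.map swapEmb ↔ q.swap ∈ P := by
  simp only [Finset.mem_map, swapEmb, Function.Embedding.coeFn_mk]
  constructor
  · rintro ⟨r, hr, rfl⟩; simpa using hr
  · intro h; exact ⟨q.swap, h, by simp⟩

lemma swap_Lcov {P : Table} (h : Rcov P) : Lcov (P.map swapEmb) := by
  rw [Lcov, ← h]
  ext p
  simp only [Set.mem_iUnion, exists_prop]
  constructor
  · rintro ⟨q, hq, hpq⟩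
    exact ⟨q.swap, mem_swap.mp hq, hpq⟩
  · rintro ⟨q, hq, hpq⟩
    exact ⟨q.swap, mem_swap.mpr (by simpa using hq), hpq⟩

lemma swap_Ldis {P : Table} (h : Rdis P) : Ldis (P.map swapEmb) := by
  intro q hq r hr hne
  exact h q.swap (mem_swap.mp hq) r.swap (mem_swap.mp hr)
    (fun he => hne (by simpa using congrArg Prod.swap he))

lemma exists_left (P : Table) (hcov : Lcov P) (p : C × C) :
    ∃ q, q ∈ P ∧ p ∈ pcyl q.1 := by
  have : p ∈ ⋃ q ∈ P, pcyl q.1 := hcov ▸ Set.mem_univ p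
  simpa using this

noncomputable def tfun (P : Table) (hcov : Lcov P) (p : C × C) : C × C :=
  pcat (exists_left P hcov p).choose.2 (pdec (exists_left P hcov p).choose.1 p)

lemma tfun_eq {P : Table} (hcov : Lcov P) (hdis : Ldis P)
    {q : Piece × Piece} (hq : q ∈ P) {p : C × C} (hp : p ∈ pcyl q.1) :
    tfun P hcov p = pcat q.2 (pdec q.1 p) := by
  obtain ⟨hq', hp'⟩ := (exists_left P hcov p).choose_spec
  by_cases h : (exists_left P hcov p).choose = q
  · rw [tfun, h]
  · exact absurd (show p ∈ pcyl (exists_left P hcov p).choose.1 ∩ pcyl q.1 from ⟨hp', hp⟩)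
      (by rw [hdis _ hq' _ hq h]; simp)

lemma tfun_cat {P : Table} (hcov : Lcov P) (hdis : Ldis P)
    {q : Piece × Piece} (hq : q ∈ P) (z : C × C) :
    tfun P hcov (pcat q.1 z) = pcat q.2 z := by
  rw [tfun_eq hcov hdis hq (pcat_mem _ _), pdec_pcat]

lemma tfun_mem (P : Table) (hcov : Lcov P) (p : C × C) :
    ∃ q ∈ P, p ∈ pcyl q.1 ∧ tfun P hcov p = pcat q.2 (pdec q.1 p) :=
  ⟨(exists_left P hcov p).choose, (exists_left P hcov p).choose_spec.1,
    (exists_left P hcov p).choose_spec.2, rfl⟩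

noncomputable def tperm (P : Table) (h1 : Lcov P) (h2 : Ldis P) (h3 : Rcov P) (h4 : Rdis P) :
    Equiv.Perm (C × C) where
  toFun := tfun P h1
  invFun := tfun (P.map swapEmb) (swap_Lcov h3)
  left_inv := by
    intro p
    obtain ⟨q, hq, hpq, heq⟩ := tfun_mem P h1 p
    rw [heq]
    have hq' : q.swap ∈ P.map swapEmb := mem_swap.mpr (by simpa using hq)
    have := tfun_cat (swap_Lcov h3) (swap_Ldis h4) hq' (pdec q.1 p)
    simp only [Prod.swap] at this
    rw [this]
    exact pcat_pdec hpq
  right_inv := by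
    intro p
    obtain ⟨r, hr, hpr, heq⟩ := tfun_mem (P.map swapEmb) (swap_Lcov h3) p
    rw [heq]
    have hq : r.swap ∈ P := mem_swap.mp hr
    have := tfun_cat h1 h2 hq (pdec r.1 p)
    simp only [Prod.swap] at this
    rw [this]
    exact pcat_pdec hpr

lemma tperm_cat {P : Table} (h1 : Lcov P) (h2 : Ldis P) (h3 : Rcov P) (h4 : Rdis P)
    {q : Piece × Piece} (hq : q ∈ P) (z : C × C) :
    tperm P h1 h2 h3 h4 (pcat q.1 z) = pcat q.2 z :=
  tfun_cat h1 h2 hq z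

lemma tperm_mem {P : Table} (h1 : Lcov P) (h2 : Ldis P) (h3 : Rcov P) (h4 : Rdis P)
    (p : C × C) :
    ∃ q ∈ P, p ∈ pcyl q.1 ∧ tperm P h1 h2 h3 h4 p ∈ pcyl q.2 := by
  obtain ⟨q, hq, hpq, heq⟩ := tfun_mem P h1 p
  refine ⟨q, hq, hpq, ?_⟩
  show tfun P h1 p ∈ pcyl q.2
  rw [heq]
  exact pcat_mem _ _

def compList (N : ℕ) (u₁ v₁ u₂ v₂ : Word) : List Piece :=
  (allPieces N).filter fun q =>
    decide (¬((u₁ <+: q.1 ∧ v₁ <+: q.2) ∨ (u₂ <+: q.1 ∧ v₂ <+: q.2)))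

lemma mem_compList {N : ℕ} {u₁ v₁ u₂ v₂ : Word} {q : Piece} :
    q ∈ compList N u₁ v₁ u₂ v₂ ↔ q ∈ allPieces N ∧
      ¬(u₁ <+: q.1 ∧ v₁ <+: q.2) ∧ ¬(u₂ <+: q.1 ∧ v₂ <+: q.2) := by
  simp only [compList, List.mem_filter, decide_eq_true_iff, not_or]

lemma piece_disj {N : ℕ} {u v : Word} {q : Piece} (hq : q ∈ allPieces N)
    (hu : u.length ≤ N) (hv : v.length ≤ N) (h : ¬(u <+: q.1 ∧ v <+: q.2)) :
    pcyl q ∩ pcyl (u, v) = ∅ := by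
  obtain ⟨h1, h2⟩ := allPieces_mem.mp hq
  by_cases hp : u <+: q.1
  · have hp2 : ¬ v <+: q.2 := fun hv2 => h ⟨hp, hv2⟩
    exact pcyl_disj_right (cyl_disj_of_not_prefix (by rw [wordsOfLen_length _ h2]; exact hv) hp2)
  · exact pcyl_disj_left (cyl_disj_of_not_prefix (by rw [wordsOfLen_length _ h1]; exact hu) hp)

lemma compList_sub {N : ℕ} {u₁ v₁ u₂ v₂ : Word}
    (hu₁ : u₁.length ≤ N) (hv₁ : v₁.length ≤ N) (hu₂ : u₂.length ≤ N) (hv₂ : v₂.length ≤ N)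
    {q : Piece} (hq : q ∈ compList N u₁ v₁ u₂ v₂) :
    pcyl q ⊆ (pcyl (u₁, v₁) ∪ pcyl (u₂, v₂))ᶜ := by
  obtain ⟨hq', hn1, hn2⟩ := mem_compList.mp hq
  intro p hp
  rintro (hp1 | hp2)
  · exact Set.eq_empty_iff_forall_notMem.mp (piece_disj hq' hu₁ hv₁ hn1) p ⟨hp, hp1⟩
  · exact Set.eq_empty_iff_forall_notMem.mp (piece_disj hq' hu₂ hv₂ hn2) p ⟨hp, hp2⟩

lemma compList_cover {N : ℕ} {u₁ v₁ u₂ v₂ : Word} {p : C × C}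
    (hp : p ∈ (pcyl (u₁, v₁) ∪ pcyl (u₂, v₂))ᶜ) :
    ∃ q ∈ compList N u₁ v₁ u₂ v₂, p ∈ pcyl q := by
  obtain ⟨q, hq, hpq⟩ := allPieces_cover N p
  refine ⟨q, mem_compList.mpr ⟨hq, ?_, ?_⟩, hpq⟩
  · rintro ⟨ha, hb⟩
    exact hp (Or.inl (pcyl_mono (cyl_mono ha) (cyl_mono hb) hpq))
  · rintro ⟨ha, hb⟩
    exact hp (Or.inr (pcyl_mono (cyl_mono ha) (cyl_mono hb) hpq))

lemma compList_pairwise (N : ℕ) (u₁ v₁ u₂ v₂ : Word) :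
    (compList N u₁ v₁ u₂ v₂).Pairwise Rp :=
  (allPieces_pairwise N).sublist List.filter_sublist

lemma compList_ne_nil {N : ℕ} {u₁ v₁ u₂ v₂ : Word}
    (h : ((pcyl (u₁, v₁) ∪ pcyl (u₂, v₂))ᶜ : Set (C × C)).Nonempty) :
    compList N u₁ v₁ u₂ v₂ ≠ [] := by
  obtain ⟨p, hp⟩ := h
  obtain ⟨q, hq, -⟩ := compList_cover (N := N) hp
  exact List.ne_nil_of_mem hq

/-- Any two transpositions of disjoint cylinder sets (whose swapped cylinders do not
exhaust `C × C`) are conjugate by a prefix-replacement homeomorphism of `C × C`. -/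
theorem stmt_14 (u₁ v₁ u₂ v₂ u₁' v₁' u₂' v₂' : List Bool)
    (τ σ : Equiv.Perm (C × C))
    (hτ : IsTranspositionOn u₁ v₁ u₂ v₂ τ)
    (hσ : IsTranspositionOn u₁' v₁' u₂' v₂' σ)
    (hτc : ((cyl u₁ ×ˢ cyl v₁) ∪ (cyl u₂ ×ˢ cyl v₂))ᶜ.Nonempty)
    (hσc : ((cyl u₁' ×ˢ cyl v₁') ∪ (cyl u₂' ×ˢ cyl v₂'))ᶜ.Nonempty) :
    ∃ h : Equiv.Perm (C × C), IsPrefixReplacement h ∧ h * τ * h⁻¹ = σ := by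
  classical
  obtain ⟨hτd, hτ₁, hτ₂, hτf⟩ := hτ
  obtain ⟨hσd, hσ₁, hσ₂, hσf⟩ := hσ
  set N := u₁.length + v₁.length + u₂.length + v₂.length +
    u₁'.length + v₁'.length + u₂'.length + v₂'.length with hNdef
  have hu₁ : u₁.length ≤ N := by omega
  have hv₁ : v₁.length ≤ N := by omega
  have hu₂ : u₂.length ≤ N := by omega
  have hv₂ : v₂.length ≤ N := by omega
  have hu₁' : u₁'.length ≤ N := by omega
  have hv₁' : v₁'.length ≤ N := by omega
  have hu₂' : u₂'.length ≤ N := by omega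
  have hv₂' : v₂'.length ≤ N := by omega
  have hτc' : ((pcyl (u₁, v₁) ∪ pcyl (u₂, v₂))ᶜ : Set (C × C)).Nonempty := hτc
  have hσc' : ((pcyl (u₁', v₁') ∪ pcyl (u₂', v₂'))ᶜ : Set (C × C)).Nonempty := hσc
  have hLne : compList N u₁ v₁ u₂ v₂ ≠ [] := compList_ne_nil hτc'
  have hRne : compList N u₁' v₁' u₂' v₂' ≠ [] := compList_ne_nil hσc'
  set L := compList N u₁ v₁ u₂ v₂ with hLdef
  set R := compList N u₁' v₁' u₂' v₂' with hRdef
  set k := max L.length R.length with hkdef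
  set L' := pad L (k - L.length) with hL'def
  set R' := pad R (k - R.length) with hR'def
  have hk1 : L.length ≤ k := le_max_left _ _
  have hk2 : R.length ≤ k := le_max_right _ _
  have hLlen : L'.length = k := by rw [hL'def, pad_length hLne]; omega
  have hRlen : R'.length = k := by rw [hR'def, pad_length hRne]; omega
  set Z := L'.zip R' with hZdef
  set e₁ : Piece × Piece := ((u₁, v₁), (u₁', v₁')) with he₁
  set e₂ : Piece × Piece := ((u₂, v₂), (u₂', v₂')) with he₂
  set tl : List (Piece × Piece) := e₁ :: e₂ :: Z with htl
  set P : Table := tl.toFinset with hPdef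
  have hPmem : ∀ x : Piece × Piece, x ∈ P ↔ x = e₁ ∨ x = e₂ ∨ x ∈ Z := by
    intro x
    rw [hPdef, List.mem_toFinset, htl]
    simp [List.mem_cons]
  -- complement containment for zip entries
  have hZL : ∀ x ∈ Z, pcyl x.1 ⊆ (pcyl (u₁, v₁) ∪ pcyl (u₂, v₂))ᶜ := by
    intro x hx
    obtain ⟨r, hr, hsub⟩ := pad_sub (k - L.length) x.1 (List.of_mem_zip hx).1
    exact hsub.trans (compList_sub hu₁ hv₁ hu₂ hv₂ hr)
  have hZR : ∀ x ∈ Z, pcyl x.2 ⊆ (pcyl (u₁', v₁') ∪ pcyl (u₂', v₂'))ᶜ := by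
    intro x hx
    obtain ⟨r, hr, hsub⟩ := pad_sub (k - R.length) x.2 (List.of_mem_zip hx).2
    exact hsub.trans (compList_sub hu₁' hv₁' hu₂' hv₂' hr)
  -- pairwise disjointness over the table list
  have hcompl_disj : ∀ {s t : Set (C × C)} {x : Set (C × C)},
      x ⊆ (s ∪ t)ᶜ → s ∩ x = ∅ ∧ t ∩ x = ∅ := by
    intro s t x hx
    constructor <;> [skip; skip] <;>
      · rw [Set.eq_empty_iff_forall_notMem]
        rintro p ⟨h1, h2⟩
        exact (hx h2) (by first | exact Or.inl h1 | exact Or.inr h1)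
  have hpw : tl.Pairwise (fun x y => Rp x.1 y.1 ∧ Rp x.2 y.2) := by
    rw [htl]
    refine List.pairwise_cons.mpr ⟨?_, List.pairwise_cons.mpr ⟨?_, ?_⟩⟩
    · intro y hy
      rcases List.mem_cons.mp hy with rfl | hy
      · exact ⟨hτd, hσd⟩
      · exact ⟨(hcompl_disj (hZL y hy)).1, (hcompl_disj (hZR y hy)).1⟩
    · intro y hy
      exact ⟨(hcompl_disj (hZL y hy)).2, (hcompl_disj (hZR y hy)).2⟩
    · rw [hZdef]
      exact pairwise_zip (pad_pairwise _ (compList_pairwise N u₁ v₁ u₂ v₂))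
        (pad_pairwise _ (compList_pairwise N u₁' v₁' u₂' v₂'))
  have hsymm : Symmetric (fun (x y : Piece × Piece) => Rp x.1 y.1 ∧ Rp x.2 y.2) :=
    fun x y hxy => ⟨Rp_symm hxy.1, Rp_symm hxy.2⟩
  have hALL : ∀ x ∈ P, ∀ y ∈ P, x ≠ y → Rp x.1 y.1 ∧ Rp x.2 y.2 := by
    intro x hx y hy hne
    exact (haveI : Std.Symm (fun (x y : Piece × Piece) => Rp x.1 y.1 ∧ Rp x.2 y.2) := ⟨hsymm⟩; hpw.forall) (by rw [hPdef, List.mem_toFinset] at hx; exact hx)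
      (by rw [hPdef, List.mem_toFinset] at hy; exact hy) hne
  have hLdis : Ldis P := fun q hq r hr hne => (hALL q hq r hr hne).1
  have hRdis : Rdis P := fun q hq r hr hne => (hALL q hq r hr hne).2
  have hLcov : Lcov P := by
    rw [Lcov, Set.eq_univ_iff_forall]
    intro p
    simp only [Set.mem_iUnion, exists_prop]
    by_cases h1 : p ∈ pcyl (u₁, v₁)
    · exact ⟨e₁, (hPmem e₁).mpr (Or.inl rfl), h1⟩
    by_cases h2 : p ∈ pcyl (u₂, v₂)
    · exact ⟨e₂, (hPmem e₂).mpr (Or.inr (Or.inl rfl)), h2⟩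
    have hp : p ∈ (pcyl (u₁, v₁) ∪ pcyl (u₂, v₂))ᶜ := by
      rintro (h | h) <;> [exact h1 h; exact h2 h]
    obtain ⟨q, hq, hpq⟩ := compList_cover (N := N) hp
    have hmem : p ∈ ⋃ q ∈ L', pcyl q := pad_cover _ (Set.mem_biUnion hq hpq)
    simp only [Set.mem_iUnion, exists_prop] at hmem
    obtain ⟨q', hq', hpq'⟩ := hmem
    obtain ⟨r', hz⟩ := zip_mem_left (hLlen.trans hRlen.symm) hq'
    exact ⟨(q', r'), (hPmem _).mpr (Or.inr (Or.inr hz)), hpq'⟩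
  have hRcov : Rcov P := by
    rw [Rcov, Set.eq_univ_iff_forall]
    intro p
    simp only [Set.mem_iUnion, exists_prop]
    by_cases h1 : p ∈ pcyl (u₁', v₁')
    · exact ⟨e₁, (hPmem e₁).mpr (Or.inl rfl), h1⟩
    by_cases h2 : p ∈ pcyl (u₂', v₂')
    · exact ⟨e₂, (hPmem e₂).mpr (Or.inr (Or.inl rfl)), h2⟩
    have hp : p ∈ (pcyl (u₁', v₁') ∪ pcyl (u₂', v₂'))ᶜ := by
      rintro (h | h) <;> [exact h1 h; exact h2 h]
    obtain ⟨q, hq, hpq⟩ := compList_cover (N := N) hp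
    have hmem : p ∈ ⋃ q ∈ R', pcyl q := pad_cover _ (Set.mem_biUnion hq hpq)
    simp only [Set.mem_iUnion, exists_prop] at hmem
    obtain ⟨q', hq', hpq'⟩ := hmem
    obtain ⟨l', hz⟩ := zip_mem_right (hLlen.trans hRlen.symm) hq'
    exact ⟨(l', q'), (hPmem _).mpr (Or.inr (Or.inr hz)), hpq'⟩
  set h : Equiv.Perm (C × C) := tperm P hLcov hLdis hRcov hRdis with hhdef
  have he₁P : e₁ ∈ P := (hPmem e₁).mpr (Or.inl rfl)
  have he₂P : e₂ ∈ P := (hPmem e₂).mpr (Or.inr (Or.inl rfl))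
  have hm1 : ∀ w w' : C, h (cat u₁ w, cat v₁ w') = (cat u₁' w, cat v₁' w') :=
    fun w w' => tperm_cat hLcov hLdis hRcov hRdis he₁P (w, w')
  have hm2 : ∀ w w' : C, h (cat u₂ w, cat v₂ w') = (cat u₂' w, cat v₂' w') :=
    fun w w' => tperm_cat hLcov hLdis hRcov hRdis he₂P (w, w')
  refine ⟨h, ⟨P, hLcov, hLdis, hRcov, hRdis, ?_⟩, ?_⟩
  · intro q hq w w'
    exact tperm_cat hLcov hLdis hRcov hRdis hq (w, w')
  · apply Equiv.ext
    intro p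
    show h (τ (h⁻¹ p)) = σ p
    by_cases h1 : p ∈ pcyl (u₁', v₁')
    · obtain ⟨⟨w, hw⟩, ⟨w', hw'⟩⟩ := h1
      have hp' : p = (cat u₁' w, cat v₁' w') := Prod.ext hw.symm hw'.symm
      have hinv : h⁻¹ p = (cat u₁ w, cat v₁ w') := by
        rw [hp', ← hm1 w w']
        exact Equiv.symm_apply_apply _ _
      rw [hinv, hτ₁, hm2, hp', hσ₁]
    by_cases h2 : p ∈ pcyl (u₂', v₂')
    · obtain ⟨⟨w, hw⟩, ⟨w', hw'⟩⟩ := h2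
      have hp' : p = (cat u₂' w, cat v₂' w') := Prod.ext hw.symm hw'.symm
      have hinv : h⁻¹ p = (cat u₂ w, cat v₂ w') := by
        rw [hp', ← hm2 w w']
        exact Equiv.symm_apply_apply _ _
      rw [hinv, hτ₂, hm1, hp', hσ₂]
    -- p is in the complement on the σ side
    have hinvc : h⁻¹ p ∉ (pcyl (u₁, v₁) ∪ pcyl (u₂, v₂)) := by
      rintro (hc | hc)
      · obtain ⟨⟨w, hw⟩, ⟨w', hw'⟩⟩ := hc
        have : h⁻¹ p = (cat u₁ w, cat v₁ w') := Prod.ext hw.symm hw'.symm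
        have hph : p = h (cat u₁ w, cat v₁ w') := by
          rw [← this]; exact (Equiv.apply_symm_apply _ _).symm
        rw [hm1] at hph
        exact h1 (hph ▸ pcat_mem (u₁', v₁') (w, w'))
      · obtain ⟨⟨w, hw⟩, ⟨w', hw'⟩⟩ := hc
        have : h⁻¹ p = (cat u₂ w, cat v₂ w') := Prod.ext hw.symm hw'.symm
        have hph : p = h (cat u₂ w, cat v₂ w') := by
          rw [← this]; exact (Equiv.apply_symm_apply _ _).symm
        rw [hm2] at hph
        exact h2 (hph ▸ pcat_mem (u₂', v₂') (w, w'))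
    rw [hτf _ hinvc, show h (h⁻¹ p) = p from h.apply_symm_apply p, hσf p (by rintro (hc | hc) <;> [exact h1 hc; exact h2 hc])]
end
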